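/- Orthogonality of classical Laguerre polynomials with explicit norm: for k > -1 and nonnegative integers n ≠ n', ∫_0^∞ L_n^k(x)·L_{n'}^k(x)·x^k·e^{-x} dx = 0, and ∫_0^∞ (L_n^k(x))²·x^k·e^{-x} dx = Γ(n+k+1)/n!. -/

import Mathlib

noncomputable def lag (n : ℕ) (k : ℝ) (x : ℝ) : ℝ :=
  ∑ i ∈ Finset.range (n + 1),
    (-1 : ℝ) ^ i * (∏ j ∈ Finset.range (n - i), (k + (i : ℝ) + 1 + (j : ℝ))) /
      (Nat.factorial (n - i) : ℝ) * x ^ i / (Nat.factorial i : ℝ)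

noncomputable def xi (k : ℝ) (m : ℕ) (x : ℝ) : ℝ := lag m k (-x)

open MeasureTheory

/-! ### Auxiliary definitions and lemmas -/

noncomputable def gg (y : ℝ) (m i : ℕ) : ℝ := ∏ t ∈ Finset.range m, (y + i + t)

noncomputable def cc (k : ℝ) (n i : ℕ) : ℝ :=
  (-1:ℝ)^i * (∏ j ∈ Finset.range (n-i), (k + i + 1 + j)) / (Nat.factorial (n-i)) / (Nat.factorial i)

lemma gg_diff (y : ℝ) (m i : ℕ) :
    gg y (m+1) i - gg y (m+1) (i+1) = -((m:ℝ)+1) * gg (y+1) m i := by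
  have h1 : gg y (m+1) i = (y + i) * gg (y+1) m i := by
    rw [gg, gg, Finset.prod_range_succ']
    push_cast
    rw [show (∏ x ∈ Finset.range m, (y + (i:ℝ) + ((x:ℝ) + 1)))
        = ∏ t ∈ Finset.range m, (y + 1 + (i:ℝ) + (t:ℝ)) from
      Finset.prod_congr rfl fun t _ => by ring]
    ring
  have h2 : gg y (m+1) (i+1) = gg (y+1) m i * (y + 1 + i + m) := by
    rw [gg, gg, Finset.prod_range_succ]
    push_cast
    rw [show (∏ x ∈ Finset.range m, (y + ((i:ℝ) + 1) + (x:ℝ)))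
        = ∏ t ∈ Finset.range m, (y + 1 + (i:ℝ) + (t:ℝ)) from
      Finset.prod_congr rfl fun t _ => by ring]
    ring
  rw [h1, h2]
  ring

lemma fd (f : ℕ → ℝ) (n : ℕ) :
    ∑ i ∈ Finset.range (n+2), (-1:ℝ)^i * ((n+1).choose i) * f i
    = ∑ i ∈ Finset.range (n+1), (-1:ℝ)^i * (n.choose i) * (f i - f (i+1)) := by
  set A : ℝ := ∑ i ∈ Finset.range (n+1), (-1:ℝ)^i * (n.choose i) * f (i+1) with hA
  set B : ℝ := ∑ i ∈ Finset.range (n+1), (-1:ℝ)^i * (n.choose (i+1)) * f (i+1) with hB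
  set D : ℝ := ∑ i ∈ Finset.range (n+1), (-1:ℝ)^i * (n.choose i) * f i with hD
  have hBD : B = f 0 - D := by
    have h1 : ∑ i ∈ Finset.range (n+2), (-1:ℝ)^i * (n.choose i) * f i = f 0 - B := by
      rw [Finset.sum_range_succ' (fun i => (-1:ℝ)^i * (n.choose i) * f i)]
      have key : ∀ i ∈ Finset.range (n+1), (-1:ℝ)^(i+1) * (n.choose (i+1)) * f (i+1)
          = -((-1:ℝ)^i * (n.choose (i+1)) * f (i+1)) := fun i _ => by ring
      rw [Finset.sum_congr rfl key, Finset.sum_neg_distrib, hB]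
      simp
      ring
    have h2 : ∑ i ∈ Finset.range (n+2), (-1:ℝ)^i * (n.choose i) * f i = D := by
      rw [Finset.sum_range_succ, hD, Nat.choose_succ_self]
      simp
    linarith [h1, h2]
  have hL : ∑ i ∈ Finset.range (n+2), (-1:ℝ)^i * ((n+1).choose i) * f i = -A - B + f 0 := by
    rw [Finset.sum_range_succ' (fun i => (-1:ℝ)^i * ((n+1).choose i) * f i)]
    have key : ∀ i ∈ Finset.range (n+1), (-1:ℝ)^(i+1) * ((n+1).choose (i+1)) * f (i+1)
        = -((-1:ℝ)^i * (n.choose i) * f (i+1)) - (-1:ℝ)^i * (n.choose (i+1)) * f (i+1) := by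
      intro i _
      rw [Nat.choose_succ_succ]
      push_cast
      ring
    rw [Finset.sum_congr rfl key, Finset.sum_sub_distrib, Finset.sum_neg_distrib, ← hA, ← hB]
    simp
  rw [hL, hBD,
    Finset.sum_congr rfl (fun i _ => mul_sub ((-1:ℝ)^i * (n.choose i)) (f i) (f (i+1))),
    Finset.sum_sub_distrib, ← hA, ← hD]
  ring

lemma fd_sum (n : ℕ) : ∀ (y : ℝ) (m : ℕ), m ≤ n →
    ∑ i ∈ Finset.range (n+1), (-1:ℝ)^i * (n.choose i) * gg y m i
    = if m = n then (-1:ℝ)^n * n.factorial else 0 := by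
  induction n with
  | zero =>
    intro y m hm
    interval_cases m
    simp [gg]
  | succ n ih =>
    intro y m hm
    rw [fd (gg y m) n]
    match m with
    | 0 =>
      have : ∀ i ∈ Finset.range (n+1), (-1:ℝ)^i * (n.choose i) * (gg y 0 i - gg y 0 (i+1)) = 0 := by
        intro i _
        simp [gg]
      rw [Finset.sum_congr rfl this]
      simp
    | m'+1 =>
      have key : ∀ i ∈ Finset.range (n+1), (-1:ℝ)^i * (n.choose i) * (gg y (m'+1) i - gg y (m'+1) (i+1))
          = -((m':ℝ)+1) * ((-1:ℝ)^i * (n.choose i) * gg (y+1) m' i) := by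
        intro i _
        rw [gg_diff]
        ring
      rw [Finset.sum_congr rfl key, ← Finset.mul_sum, ih (y+1) m' (by omega)]
      by_cases h : m' = n
      · subst h
        simp [Nat.factorial_succ, pow_succ]
        ring
      · simp [h, fun hc : m' + 1 = n + 1 => h (by omega)]

lemma gamma_prod (y : ℝ) (hy : 0 < y) (m : ℕ) :
    Real.Gamma (y + m) = (∏ t ∈ Finset.range m, (y + t)) * Real.Gamma y := by
  induction m with
  | zero => simp
  | succ m ih =>
    have h1 : y + ((m:ℝ)+1) = (y + m) + 1 := by ring
    push_cast
    rw [h1, Real.Gamma_add_one (by positivity), ih, Finset.prod_range_succ]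
    ring

lemma lag_eq (n : ℕ) (k x : ℝ) : lag n k x = ∑ i ∈ Finset.range (n+1), cc k n i * x ^ i := by
  unfold lag cc
  exact Finset.sum_congr rfl fun i _ => by ring

lemma term_eq (k : ℝ) (hk : -1 < k) (n i m : ℕ) (hi : i ≤ n) :
    cc k n i * Real.Gamma (k + (m + i : ℕ) + 1)
    = Real.Gamma (k + n + 1) / (Nat.factorial n) * ((-1:ℝ)^i * (n.choose i) * gg (k+1) m i) := by
  have hy : 0 < k + i + 1 := by
    have : (0:ℝ) ≤ i := Nat.cast_nonneg i
    linarith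
  have e1 : Real.Gamma (k + (m + i : ℕ) + 1) = gg (k+1) m i * Real.Gamma (k+i+1) := by
    rw [show k + ((m + i : ℕ):ℝ) + 1 = (k+(i:ℝ)+1) + (m:ℕ) by push_cast; ring,
      gamma_prod (k+i+1) hy m]
    congr 1
    rw [gg]
    exact Finset.prod_congr rfl fun t _ => by ring
  have e2 : (∏ j ∈ Finset.range (n-i), (k + i + 1 + j)) * Real.Gamma (k+i+1)
      = Real.Gamma (k+n+1) := by
    have h := gamma_prod (k+i+1) hy (n-i)
    rw [show (k+(i:ℝ)+1) + ((n-i:ℕ):ℝ) = k + n + 1 by rw [Nat.cast_sub hi]; ring] at h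
    rw [h]
  have e3 : ((n.choose i : ℝ)) * (Nat.factorial i) * (Nat.factorial (n-i)) = Nat.factorial n := by
    exact_mod_cast congrArg (Nat.cast : ℕ → ℝ) (Nat.choose_mul_factorial_mul_factorial hi)
  have hf1 : ((Nat.factorial (n-i) : ℝ)) ≠ 0 := Nat.cast_ne_zero.mpr (Nat.factorial_ne_zero _)
  have hf2 : ((Nat.factorial i : ℝ)) ≠ 0 := Nat.cast_ne_zero.mpr (Nat.factorial_ne_zero _)
  have hf3 : ((Nat.factorial n : ℝ)) ≠ 0 := Nat.cast_ne_zero.mpr (Nat.factorial_ne_zero _)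
  rw [cc, e1]
  rw [← e2, ← e3]
  field_simp
  rw [mul_div_cancel_right₀ _ (by exact_mod_cast (Nat.choose_pos hi).ne')]

lemma row_sum (k : ℝ) (hk : -1 < k) (n m : ℕ) (hm : m ≤ n) :
    ∑ i ∈ Finset.range (n+1), cc k n i * Real.Gamma (k + (m + i : ℕ) + 1)
    = Real.Gamma (k+n+1) / (Nat.factorial n) *
        (if m = n then (-1:ℝ)^n * n.factorial else 0) := by
  rw [Finset.sum_congr rfl fun i hi =>
      term_eq k hk n i m (Nat.lt_succ_iff.mp (Finset.mem_range.mp hi)),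
    ← Finset.mul_sum, fd_sum n (k+1) m hm]

lemma moment_eqOn (k : ℝ) (m : ℕ) :
    Set.EqOn (fun x : ℝ => x ^ m * x ^ k * Real.exp (-x))
      (fun x : ℝ => Real.exp (-x) * x ^ (k + (m:ℝ) + 1 - 1)) (Set.Ioi 0) := by
  intro x hx
  have hx0 : (0:ℝ) < x := hx
  simp only
  rw [show k + (m:ℝ) + 1 - 1 = k + m by ring, Real.rpow_add hx0, Real.rpow_natCast]
  ring

lemma moment (k : ℝ) (hk : -1 < k) (m : ℕ) :
    ∫ x in Set.Ioi (0:ℝ), x ^ m * x ^ k * Real.exp (-x) = Real.Gamma (k + m + 1) := by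
  have hs : 0 < k + m + 1 := by
    have : (0:ℝ) ≤ m := Nat.cast_nonneg m
    linarith
  rw [Real.Gamma_eq_integral hs]
  exact MeasureTheory.setIntegral_congr_fun measurableSet_Ioi (moment_eqOn k m)

lemma moment_integrable (k : ℝ) (hk : -1 < k) (m : ℕ) :
    IntegrableOn (fun x : ℝ => x ^ m * x ^ k * Real.exp (-x)) (Set.Ioi 0) := by
  have hs : 0 < k + m + 1 := by
    have : (0:ℝ) ≤ m := Nat.cast_nonneg m
    linarith
  exact (Real.GammaIntegral_convergent hs).congr_fun (moment_eqOn k m).symm measurableSet_Ioi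

lemma integral_expand (k : ℝ) (hk : -1 < k) (n n' : ℕ) :
    ∫ x in Set.Ioi (0:ℝ), lag n k x * lag n' k x * x ^ k * Real.exp (-x)
    = ∑ j ∈ Finset.range (n'+1), cc k n' j *
        ∑ i ∈ Finset.range (n+1), cc k n i * Real.Gamma (k + (j + i : ℕ) + 1) := by
  have hpt : (fun x : ℝ => lag n k x * lag n' k x * x ^ k * Real.exp (-x))
      = fun x : ℝ => ∑ j ∈ Finset.range (n'+1), ∑ i ∈ Finset.range (n+1),
          cc k n' j * cc k n i * (x ^ (j + i) * x ^ k * Real.exp (-x)) := by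
    funext x
    rw [lag_eq, lag_eq, mul_comm (∑ i ∈ Finset.range (n+1), cc k n i * x ^ i),
      Finset.sum_mul_sum, Finset.sum_mul, Finset.sum_mul]
    refine Finset.sum_congr rfl fun j _ => ?_
    rw [Finset.sum_mul, Finset.sum_mul]
    refine Finset.sum_congr rfl fun i _ => ?_
    rw [pow_add]
    ring
  rw [hpt, MeasureTheory.integral_finset_sum]
  · refine Finset.sum_congr rfl fun j _ => ?_
    rw [MeasureTheory.integral_finset_sum, Finset.mul_sum]
    · refine Finset.sum_congr rfl fun i _ => ?_
      rw [MeasureTheory.integral_const_mul, moment k hk (j+i)]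
      ring
    · intro i _
      exact ((moment_integrable k hk (j+i)).const_mul _)
  · intro j _
    exact integrable_finset_sum _ fun i _ => ((moment_integrable k hk (j+i)).const_mul _)

lemma ortho (k : ℝ) (hk : -1 < k) (n n' : ℕ) (h : n' ≤ n) :
    ∫ x in Set.Ioi (0:ℝ), lag n k x * lag n' k x * x ^ k * Real.exp (-x)
    = if n' = n then Real.Gamma (k+n+1) / (Nat.factorial n) else 0 := by
  rw [integral_expand k hk n n']
  have hrow : ∀ j ∈ Finset.range (n'+1), cc k n' j *
      ∑ i ∈ Finset.range (n+1), cc k n i * Real.Gamma (k + (j + i : ℕ) + 1)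
      = cc k n' j * (Real.Gamma (k+n+1) / (Nat.factorial n) *
        (if j = n then (-1:ℝ)^n * n.factorial else 0)) := by
    intro j hj
    have hjn : j ≤ n := by
      have := Finset.mem_range.mp hj
      omega
    rw [row_sum k hk n j hjn]
  rw [Finset.sum_congr rfl hrow]
  by_cases hcase : n' = n
  · subst hcase
    rw [Finset.sum_eq_single n']
    · simp only [if_pos rfl, cc, Nat.sub_self, Finset.range_zero, Finset.prod_empty,
        Nat.factorial_zero, Nat.cast_one]
      have hf : ((Nat.factorial n' : ℝ)) ≠ 0 := Nat.cast_ne_zero.mpr (Nat.factorial_ne_zero _)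
      have hsq : (-1:ℝ)^(n' * 2) = 1 := by
        rw [mul_comm, pow_mul]
        norm_num
      simp only [if_true]
      field_simp
      linear_combination (Real.Gamma (k+n'+1)) * hsq
    · intro j hj hjne
      simp [hjne]
    · intro hme
      exact absurd (Finset.self_mem_range_succ n') hme
  · have : ∀ j ∈ Finset.range (n'+1), cc k n' j *
        (Real.Gamma (k+n+1) / (Nat.factorial n) *
          (if j = n then (-1:ℝ)^n * n.factorial else 0)) = 0 := by
      intro j hj
      have : j ≠ n := by
        have := Finset.mem_range.mp hj
        omega
      simp [this]
    rw [Finset.sum_congr rfl this]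
    simp [hcase]

/-- Orthogonality of the classical Laguerre polynomials with explicit norm. -/
theorem laguerre_orthogonality (k : ℝ) (hk : -1 < k) (n n' : ℕ) (hnn : n ≠ n') :
    (∫ x in Set.Ioi (0 : ℝ),
        lag n k x * lag n' k x * Real.rpow x k * Real.exp (-x) = 0) ∧
    (∫ x in Set.Ioi (0 : ℝ),
        (lag n k x) ^ 2 * Real.rpow x k * Real.exp (-x)
          = Real.Gamma ((n : ℝ) + k + 1) / (Nat.factorial n : ℝ)) := by
  constructor
  · rcases le_or_gt n' n with h | h
    · rw [show (∫ x in Set.Ioi (0 : ℝ), lag n k x * lag n' k x * Real.rpow x k * Real.exp (-x))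
          = ∫ x in Set.Ioi (0:ℝ), lag n k x * lag n' k x * x ^ k * Real.exp (-x) from rfl,
        ortho k hk n n' h, if_neg (fun hc => hnn hc.symm)]
    · have heq : (fun x : ℝ => lag n k x * lag n' k x * Real.rpow x k * Real.exp (-x))
          = fun x : ℝ => lag n' k x * lag n k x * x ^ k * Real.exp (-x) := by
        funext x
        show lag n k x * lag n' k x * x ^ k * Real.exp (-x) = _
        ring
      rw [show (∫ x in Set.Ioi (0 : ℝ), lag n k x * lag n' k x * Real.rpow x k * Real.exp (-x))
          = ∫ x in Set.Ioi (0:ℝ), lag n' k x * lag n k x * x ^ k * Real.exp (-x) from by rw [heq],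
        ortho k hk n' n h.le, if_neg hnn]
  · have heq : (fun x : ℝ => (lag n k x) ^ 2 * Real.rpow x k * Real.exp (-x))
        = fun x : ℝ => lag n k x * lag n k x * x ^ k * Real.exp (-x) := by
      funext x
      show (lag n k x) ^ 2 * x ^ k * Real.exp (-x) = _
      ring
    rw [show (∫ x in Set.Ioi (0 : ℝ), (lag n k x) ^ 2 * Real.rpow x k * Real.exp (-x))
        = ∫ x in Set.Ioi (0:ℝ), lag n k x * lag n k x * x ^ k * Real.exp (-x) from by rw [heq],
      ortho k hk n n le_rfl]
    rw [if_pos rfl, show (n:ℝ) + k + 1 = k + n + 1 by ring]
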